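/- arXiv:1804.11114 — 4 statements merged into one kernel-verified Lean document; each statement's English description precedes it below -/
import Mathlib

section
/- Suppose all maps f_α : M → M (α ∈ A) preserve the same probability measure λ on M, and the partition elements G_w (w ∈ W) do not depend on α. Then the probability measure P₀ = P × λ on Ω × M is invariant under the map F(ω, x) = (τ_{e(x)} ω, f_{ω_{e(x)}}(x)), where e(x) = Σ_{w ∈ W} 1_{G_w}(x)·w and P is a translation-invariant probability measure on Ω = A^{Z^d}. -/
open MeasureTheory

/-- If all local maps `f α` preserve the same probability measure `lam` and the
partition `{G w}` (gates) is deterministic (independent of `α`, encoded by the jump function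
`e` with `x ∈ G w ↔ e x = w`), then the product measure `P × lam` on `Ω × M` is invariant
under the environment-seen-from-the-particle map
`F(ω, x) = (τ_{e x} ω, f_{ω_{e x}} x)`, where `P` is a translation-invariant probability
measure on `Ω = A^{ℤ^d}`. -/
theorem stmt1 {A M : Type*} [MeasurableSpace A] [MeasurableSpace M] {d : ℕ}
    (W : Finset (Fin d → ℤ)) (G : (Fin d → ℤ) → Set M)
    (f : A → M → M) (e : M → Fin d → ℤ)
    (P : Measure ((Fin d → ℤ) → A)) (lam : Measure M)
    [IsProbabilityMeasure P] [IsProbabilityMeasure lam]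
    (hPinv : ∀ z : Fin d → ℤ,
      Measure.map (fun ω : (Fin d → ℤ) → A => fun v => ω (v + z)) P = P)
    (hlaminv : ∀ α : A, Measure.map (f α) lam = lam)
    (hmeasf : ∀ α : A, Measurable (f α))
    (hmease : Measurable e)
    (hGmeas : ∀ w, MeasurableSet (G w))
    (hG : ∀ (x : M) (w : Fin d → ℤ), x ∈ G w ↔ e x = w)
    (heW : ∀ x, e x ∈ W)
    (hFmeas : Measurable (fun pt : ((Fin d → ℤ) → A) × M =>
      ((fun v => pt.1 (v + e pt.2), f (pt.1 (e pt.2)) pt.2) :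
        ((Fin d → ℤ) → A) × M))) :
    Measure.map (fun pt : ((Fin d → ℤ) → A) × M =>
      ((fun v => pt.1 (v + e pt.2), f (pt.1 (e pt.2)) pt.2) :
        ((Fin d → ℤ) → A) × M)) (P.prod lam) = P.prod lam := by
  classical
  set Ω := (Fin d → ℤ) → A with hΩ
  set F : Ω × M → Ω × M :=
    fun pt => (fun v => pt.1 (v + e pt.2), f (pt.1 (e pt.2)) pt.2) with hFdef
  -- joint measurability of (α, x) ↦ f α x, extracted from hFmeas via constant environments
  have hφ : Measurable (fun p : A × M => (((fun _ => p.1 : Ω), p.2) : Ω × M)) :=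
    (measurable_pi_lambda _ fun _ => measurable_fst).prodMk measurable_snd
  have hfj : Measurable (fun p : A × M => f p.1 p.2) := by
    have h := hFmeas.snd.comp hφ
    exact h
  -- translations are measurable
  have hτ : ∀ w : Fin d → ℤ, Measurable (fun ω : Ω => fun v => ω (v + w)) :=
    fun w => measurable_pi_lambda _ fun v => measurable_pi_apply (v + w)
  -- the "gate" sets
  have hgate : ∀ w, MeasurableSet {x : M | e x = w} := fun w =>
    hmease (measurableSet_singleton w)
  symm
  refine Measure.prod_eq fun s t hs ht => ?_
  rw [Measure.map_apply hFmeas ((hs.prod ht))]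
  -- decompose the preimage along the gates
  have hEeq : F ⁻¹' (s ×ˢ t) =
      ⋃ w ∈ W, {p : Ω × M | (fun v => p.1 (v + w)) ∈ s ∧ f (p.1 w) p.2 ∈ t ∧ e p.2 = w} := by
    ext p
    simp only [Set.mem_preimage, Set.mem_prod, Set.mem_iUnion, Set.mem_setOf_eq, hFdef]
    constructor
    · rintro ⟨h1, h2⟩
      exact ⟨e p.2, heW p.2, h1, h2, rfl⟩
    · rintro ⟨w, -, h1, h2, hw⟩
      rw [hw]
      exact ⟨h1, h2⟩
  have hEw : ∀ w : Fin d → ℤ, MeasurableSet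
      {p : Ω × M | (fun v => p.1 (v + w)) ∈ s ∧ f (p.1 w) p.2 ∈ t ∧ e p.2 = w} := by
    intro w
    refine MeasurableSet.inter ((hτ w).comp measurable_fst hs) ?_
    refine MeasurableSet.inter ?_ (hmease.comp measurable_snd (measurableSet_singleton w))
    have h2 : Measurable fun p : Ω × M => f (p.1 w) p.2 := by
      have h1 : Measurable fun p : Ω × M => ((p.1 w, p.2) : A × M) :=
        ((measurable_pi_apply w).comp measurable_fst).prodMk measurable_snd
      exact hfj.comp h1
    exact h2 ht
  rw [hEeq, measure_biUnion_finset ?disj (fun w _ => hEw w)]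
  case disj =>
    intro w _ w' _ hww'
    refine Set.disjoint_left.2 fun p hp hp' => hww' ?_
    rw [← hp.2.2, ← hp'.2.2]
  -- compute the measure of each piece
  have hg : ∀ w, Measurable (fun α : A => lam {x : M | f α x ∈ t ∧ e x = w}) := by
    intro w
    have hD : MeasurableSet {p : A × M | f p.1 p.2 ∈ t ∧ e p.2 = w} :=
      (hfj ht).inter (hmease.comp measurable_snd (measurableSet_singleton w))
    exact measurable_measure_prodMk_left (ν := lam) hD
  have key : ∀ w ∈ W, (P.prod lam)
      {p : Ω × M | (fun v => p.1 (v + w)) ∈ s ∧ f (p.1 w) p.2 ∈ t ∧ e p.2 = w}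
      = ∫⁻ ω, s.indicator (fun _ => (1 : ENNReal)) ω * lam {x : M | f (ω 0) x ∈ t ∧ e x = w} ∂P := by
    intro w _
    rw [Measure.prod_apply (hEw w)]
    have hslice : ∀ ω : Ω,
        lam (Prod.mk ω ⁻¹' {p : Ω × M | (fun v => p.1 (v + w)) ∈ s ∧ f (p.1 w) p.2 ∈ t ∧ e p.2 = w})
        = s.indicator (fun _ => (1 : ENNReal)) (fun v => ω (v + w))
            * lam {x : M | f (ω w) x ∈ t ∧ e x = w} := by
      intro ω
      by_cases hω : (fun v => ω (v + w)) ∈ s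
      · rw [Set.indicator_of_mem hω, one_mul]
        congr 1
        ext x
        simp [hω]
      · rw [Set.indicator_of_notMem hω, zero_mul]
        convert measure_empty
        · ext x; simp [hω]
        · infer_instance
    simp only [hslice]
    -- use translation invariance of P
    have hH : Measurable (fun ω : Ω =>
        s.indicator (fun _ => (1 : ENNReal)) ω * lam {x : M | f (ω 0) x ∈ t ∧ e x = w}) :=
      (measurable_const.indicator hs).mul ((hg w).comp (measurable_pi_apply 0))
    calc ∫⁻ ω, s.indicator (fun _ => (1 : ENNReal)) (fun v => ω (v + w))
            * lam {x : M | f (ω w) x ∈ t ∧ e x = w} ∂P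
        = ∫⁻ ω, (fun ω' : Ω => s.indicator (fun _ => (1 : ENNReal)) ω'
            * lam {x : M | f (ω' 0) x ∈ t ∧ e x = w}) ((fun v => ω (v + w))) ∂P := by
          refine lintegral_congr fun ω => ?_
          simp only []
          rw [zero_add]
      _ = ∫⁻ ω', s.indicator (fun _ => (1 : ENNReal)) ω'
            * lam {x : M | f (ω' 0) x ∈ t ∧ e x = w}
            ∂(Measure.map (fun ω : Ω => fun v => ω (v + w)) P) := (lintegral_map hH (hτ w)).symm
      _ = _ := by rw [hPinv w]
  have hmeasw : ∀ w : Fin d → ℤ, Measurable (fun ω : Ω =>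
      s.indicator (fun _ => (1 : ENNReal)) ω * lam {x : M | f (ω 0) x ∈ t ∧ e x = w}) :=
    fun w => (measurable_const.indicator hs).mul ((hg w).comp (measurable_pi_apply 0))
  rw [Finset.sum_congr rfl key, ← lintegral_finset_sum _ (fun w _ => hmeasw w)]
  have hsum : ∀ ω : Ω,
      ∑ w ∈ W, s.indicator (fun _ => (1 : ENNReal)) ω * lam {x : M | f (ω 0) x ∈ t ∧ e x = w}
      = s.indicator (fun _ => (1 : ENNReal)) ω * lam t := by
    intro ω
    rw [← Finset.mul_sum]
    congr 1
    have hcover : (f (ω 0)) ⁻¹' t = ⋃ w ∈ W, {x : M | f (ω 0) x ∈ t ∧ e x = w} := by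
      ext x
      simp only [Set.mem_preimage, Set.mem_iUnion, Set.mem_setOf_eq]
      exact ⟨fun h => ⟨e x, heW x, h, rfl⟩, fun ⟨w, _, h, _⟩ => h⟩
    have : lam ((f (ω 0)) ⁻¹' t) = lam t := by
      rw [← Measure.map_apply (hmeasf (ω 0)) ht, hlaminv]
    rw [← this, hcover, measure_biUnion_finset]
    · intro w _ w' _ hww'
      refine Set.disjoint_left.2 fun x hx hx' => hww' ?_
      rw [← hx.2, ← hx'.2]
    · exact fun w _ => ((hmeasf (ω 0)) ht).inter (hgate w)
  simp only [hsum]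
  have : ∀ ω : Ω, s.indicator (fun _ => (1 : ENNReal)) ω * lam t
      = s.indicator (fun _ => lam t) ω := by
    intro ω
    by_cases hω : ω ∈ s <;> simp [hω]
  simp only [this]
  rw [lintegral_indicator hs, setLIntegral_const, mul_comm]
end

section
/- Assume the conditional jump probabilities satisfy the weak-memory condition (Exp): there exist C* > 0 and ν ∈ (0,1) such that for P-a.e. ω, all n > m ≥ 0 and all sequences w̄ ∈ W^N, |P_ω(w̄_n | w̄_0 … w̄_{n-1}) − P_{τ_{z_m} ω}(w̄_n | w̄_m … w̄_{n-1})| ≤ C* ν^{n−m}, where z_m = w̄_0 + … + w̄_{m−1}. Then there exists C > 0 such that for all n ≥ m, |P*(z_{n+1} | z_{n−m+1}, …, z_n, ω) − P*(z_{n+1} | z_1, …, z_n, ω)| ≤ C ν^m, i.e. the process loses memory of the distant past exponentially fast. -/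
open MeasureTheory Filter Finset

private lemma avg_bound {ι : Type*} {s : Finset ι} (hs : s.Nonempty) (a b : ι → ℝ)
    (hb : ∀ i ∈ s, 0 < b i) (Q ε : ℝ)
    (h : ∀ i ∈ s, |a i / b i - Q| ≤ ε) :
    |(∑ i ∈ s, a i) / (∑ i ∈ s, b i) - Q| ≤ ε := by
  have hB : 0 < ∑ i ∈ s, b i := Finset.sum_pos hb hs
  have key : ∀ i ∈ s, |a i - Q * b i| ≤ ε * b i := by
    intro i hi
    have hbi := hb i hi
    have hrw : a i - Q * b i = b i * (a i / b i - Q) := by field_simp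
    rw [hrw, abs_mul, abs_of_pos hbi, mul_comm]
    exact mul_le_mul_of_nonneg_right (h i hi) hbi.le
  have key2 : |(∑ i ∈ s, a i) - Q * ∑ i ∈ s, b i| ≤ ε * ∑ i ∈ s, b i := by
    rw [Finset.mul_sum, ← Finset.sum_sub_distrib, Finset.mul_sum]
    exact (Finset.abs_sum_le_sum_abs _ _).trans (Finset.sum_le_sum key)
  have hrw : (∑ i ∈ s, a i) / (∑ i ∈ s, b i) - Q
      = ((∑ i ∈ s, a i) - Q * ∑ i ∈ s, b i) / (∑ i ∈ s, b i) := by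
    field_simp
  rw [hrw, abs_div, abs_of_pos hB, div_le_iff₀ hB]
  exact key2

/-- If the conditional jump probabilities satisfy the weak-memory condition
(Exp), then the process loses memory of the distant past exponentially fast:
`|P*(z_{n+1} | z_{n-m+1},…,z_n, ω) − P*(z_{n+1} | z_1,…,z_n, ω)| ≤ C ν^m`.
Here `p ω l` denotes the probability of the finite word of jumps `l`, conditioning on
positions `z_{n-m+1},…,z_n` amounts to summing over all admissible prefixes of length
`n-m+1` arriving at `z_{n-m+1}`, and conditioning on all of `z_1,…,z_n` determines the
whole word. -/
theorem stmt3 {A : Type*} [MeasurableSpace A] {d : ℕ}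
    (W : Finset (Fin d → ℤ))
    (P : Measure ((Fin d → ℤ) → A)) [IsProbabilityMeasure P]
    (p : ((Fin d → ℤ) → A) → List (Fin d → ℤ) → ℝ)
    (hNil : ∀ ω, p ω [] = 1)
    (hCompat : ∀ ω l, p ω l = ∑ w ∈ W, p ω (l ++ [w]))
    (hPos : ∀ᵐ ω ∂P, ∀ l : List (Fin d → ℤ), (∀ v ∈ l, v ∈ W) → 0 < p ω l)
    (Cstar ν : ℝ) (hCstar : 0 < Cstar) (hν : ν ∈ Set.Ioo (0 : ℝ) 1)
    (hExp : ∀ᵐ ω ∂P, ∀ wb : ℕ → Fin d → ℤ, (∀ k, wb k ∈ W) →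
      ∀ m n : ℕ, m < n →
        |p ω (List.ofFn fun k : Fin (n + 1) => wb (k : ℕ)) /
            p ω (List.ofFn fun k : Fin n => wb (k : ℕ)) -
          p (fun v => ω (v + ∑ k ∈ range m, wb k))
              (List.ofFn fun k : Fin (n - m + 1) => wb (m + (k : ℕ))) /
            p (fun v => ω (v + ∑ k ∈ range m, wb k))
              (List.ofFn fun k : Fin (n - m) => wb (m + (k : ℕ)))| ≤ Cstar * ν ^ (n - m)) :
    ∃ C > 0, ∀ᵐ ω ∂P, ∀ wb : ℕ → Fin d → ℤ, (∀ k, wb k ∈ W) →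
      ∀ m n : ℕ, m ≤ n →
        |(∑ u ∈ Finset.univ.filter (fun u : Fin (n - m + 1) → W =>
              (∑ k, (u k : Fin d → ℤ)) = ∑ k ∈ range (n - m + 1), wb k),
            p ω (List.ofFn fun k : Fin (n + 1) =>
              if h : (k : ℕ) < n - m + 1 then (u ⟨(k : ℕ), h⟩ : Fin d → ℤ)
              else wb (k : ℕ))) /
          (∑ u ∈ Finset.univ.filter (fun u : Fin (n - m + 1) → W =>
              (∑ k, (u k : Fin d → ℤ)) = ∑ k ∈ range (n - m + 1), wb k),
            p ω (List.ofFn fun k : Fin n =>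
              if h : (k : ℕ) < n - m + 1 then (u ⟨(k : ℕ), h⟩ : Fin d → ℤ)
              else wb (k : ℕ))) -
          p ω (List.ofFn fun k : Fin (n + 1) => wb (k : ℕ)) /
            p ω (List.ofFn fun k : Fin n => wb (k : ℕ))| ≤ C * ν ^ m := by
  obtain ⟨hν0, hν1⟩ := hν
  refine ⟨(2 * Cstar + 1) / ν, by positivity, ?_⟩
  filter_upwards [hPos, hExp] with ω hp hexp
  intro wb hwb m n hmn
  -- admissibility of ofFn words
  have hmemOfFn : ∀ {N : ℕ} (g : Fin N → Fin d → ℤ), (∀ i, g i ∈ W) →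
      ∀ v ∈ List.ofFn g, v ∈ W := by
    intro N g hg v hv
    rw [List.mem_ofFn] at hv
    obtain ⟨i, rfl⟩ := hv
    exact hg i
  have hpOfFn : ∀ {N : ℕ} (g : Fin N → Fin d → ℤ), (∀ i, g i ∈ W) →
      0 < p ω (List.ofFn g) := fun g hg => hp _ (hmemOfFn g hg)
  have hstep : ∀ {N : ℕ} (g : Fin (N + 1) → Fin d → ℤ), (∀ i, g i ∈ W) →
      p ω (List.ofFn g) ≤ p ω (List.ofFn fun i : Fin N => g i.castSucc) := by
    intro N g hg
    rw [List.ofFn_succ', List.concat_eq_append,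
      hCompat ω (List.ofFn fun i : Fin N => g i.castSucc)]
    refine Finset.single_le_sum (f := fun w => p ω ((List.ofFn fun i : Fin N => g i.castSucc) ++ [w]))
      (fun w hw => (hp _ ?_).le) (hg (Fin.last N))
    intro v hv
    rcases List.mem_append.mp hv with h | h
    · exact hmemOfFn _ (fun i => hg _) v h
    · simp only [List.mem_singleton] at h
      exact h ▸ hw
  -- the filter set and its members
  set F := Finset.univ.filter (fun u : Fin (n - m + 1) → W =>
      (∑ k, (u k : Fin d → ℤ)) = ∑ k ∈ range (n - m + 1), wb k) with hF
  have hne : F.Nonempty := by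
    refine ⟨fun i => ⟨wb i, hwb i⟩, Finset.mem_filter.mpr ⟨Finset.mem_univ _, ?_⟩⟩
    exact Fin.sum_univ_eq_sum_range wb (n - m + 1)
  have hadm : ∀ u : Fin (n - m + 1) → W, ∀ k : ℕ,
      (if h : k < n - m + 1 then (u ⟨k, h⟩ : Fin d → ℤ) else wb k) ∈ W := by
    intro u k
    split
    · exact (u _).2
    · exact hwb k
  have hbpos : ∀ u ∈ F, 0 < p ω (List.ofFn fun k : Fin n =>
      if h : (k : ℕ) < n - m + 1 then (u ⟨(k : ℕ), h⟩ : Fin d → ℤ) else wb (k : ℕ)) :=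
    fun u _ => hpOfFn _ (fun i => hadm u i)
  have hbwb : 0 < p ω (List.ofFn fun k : Fin n => wb (k : ℕ)) :=
    hpOfFn _ (fun i => hwb i)
  rcases le_or_gt m 1 with hm | hm
  · -- trivial case: both ratios lie in [0,1]
    have hratio : ∀ {N : ℕ} (g : Fin (N + 1) → Fin d → ℤ), (∀ i, g i ∈ W) →
        0 ≤ p ω (List.ofFn g) := fun g hg => (hpOfFn g hg).le
    have hSb : 0 < ∑ u ∈ F, p ω (List.ofFn fun k : Fin n =>
        if h : (k : ℕ) < n - m + 1 then (u ⟨(k : ℕ), h⟩ : Fin d → ℤ) else wb (k : ℕ)) :=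
      Finset.sum_pos hbpos hne
    have hSa0 : 0 ≤ ∑ u ∈ F, p ω (List.ofFn fun k : Fin (n + 1) =>
        if h : (k : ℕ) < n - m + 1 then (u ⟨(k : ℕ), h⟩ : Fin d → ℤ) else wb (k : ℕ)) :=
      Finset.sum_nonneg fun u _ => (hpOfFn _ (fun i => hadm u i)).le
    have hSab : (∑ u ∈ F, p ω (List.ofFn fun k : Fin (n + 1) =>
        if h : (k : ℕ) < n - m + 1 then (u ⟨(k : ℕ), h⟩ : Fin d → ℤ) else wb (k : ℕ)))
        ≤ ∑ u ∈ F, p ω (List.ofFn fun k : Fin n =>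
        if h : (k : ℕ) < n - m + 1 then (u ⟨(k : ℕ), h⟩ : Fin d → ℤ) else wb (k : ℕ)) := by
      refine Finset.sum_le_sum fun u _ => ?_
      exact hstep (fun k : Fin (n + 1) =>
        if h : (k : ℕ) < n - m + 1 then (u ⟨(k : ℕ), h⟩ : Fin d → ℤ) else wb (k : ℕ))
        (fun i => hadm u i)
    have hawb : p ω (List.ofFn fun k : Fin (n + 1) => wb (k : ℕ))
        ≤ p ω (List.ofFn fun k : Fin n => wb (k : ℕ)) :=
      hstep (fun k : Fin (n + 1) => wb (k : ℕ)) (fun i => hwb i)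
    have hawb0 : 0 ≤ p ω (List.ofFn fun k : Fin (n + 1) => wb (k : ℕ)) :=
      (hpOfFn _ (fun i => hwb i)).le
    have h1 : (∑ u ∈ F, p ω (List.ofFn fun k : Fin (n + 1) =>
        if h : (k : ℕ) < n - m + 1 then (u ⟨(k : ℕ), h⟩ : Fin d → ℤ) else wb (k : ℕ))) /
        (∑ u ∈ F, p ω (List.ofFn fun k : Fin n =>
        if h : (k : ℕ) < n - m + 1 then (u ⟨(k : ℕ), h⟩ : Fin d → ℤ) else wb (k : ℕ))) ≤ 1 :=
      div_le_one_of_le₀ hSab hSb.le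
    have h2 : 0 ≤ (∑ u ∈ F, p ω (List.ofFn fun k : Fin (n + 1) =>
        if h : (k : ℕ) < n - m + 1 then (u ⟨(k : ℕ), h⟩ : Fin d → ℤ) else wb (k : ℕ))) /
        (∑ u ∈ F, p ω (List.ofFn fun k : Fin n =>
        if h : (k : ℕ) < n - m + 1 then (u ⟨(k : ℕ), h⟩ : Fin d → ℤ) else wb (k : ℕ))) :=
      div_nonneg hSa0 hSb.le
    have h3 : p ω (List.ofFn fun k : Fin (n + 1) => wb (k : ℕ)) /
        p ω (List.ofFn fun k : Fin n => wb (k : ℕ)) ≤ 1 := div_le_one_of_le₀ hawb hbwb.le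
    have h4 : 0 ≤ p ω (List.ofFn fun k : Fin (n + 1) => wb (k : ℕ)) /
        p ω (List.ofFn fun k : Fin n => wb (k : ℕ)) := div_nonneg hawb0 hbwb.le
    have hC : 1 ≤ (2 * Cstar + 1) / ν * ν ^ m := by
      rw [div_mul_eq_mul_div, le_div_iff₀ hν0, one_mul]
      interval_cases m
      · nlinarith
      · nlinarith
    rw [abs_sub_le_iff]
    constructor <;> linarith
  · -- main case: m ≥ 2, use (Exp) with shift n - m + 1
    have hlt : n - m + 1 < n := by omega
    have he : n - (n - m + 1) = m - 1 := by omega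
    -- the common comparison quantity
    set z : Fin d → ℤ := ∑ k ∈ range (n - m + 1), wb k with hz
    set Q : ℝ := p (fun v => ω (v + z))
        (List.ofFn fun k : Fin (m - 1 + 1) => wb ((n - m + 1) + (k : ℕ))) /
      p (fun v => ω (v + z))
        (List.ofFn fun k : Fin (m - 1) => wb ((n - m + 1) + (k : ℕ))) with hQ
    have h0 := hexp wb hwb (n - m + 1) n hlt
    rw [he] at h0
    -- per-u bound
    have hQu : ∀ u ∈ F, |p ω (List.ofFn fun k : Fin (n + 1) =>
        if h : (k : ℕ) < n - m + 1 then (u ⟨(k : ℕ), h⟩ : Fin d → ℤ) else wb (k : ℕ)) /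
        p ω (List.ofFn fun k : Fin n =>
        if h : (k : ℕ) < n - m + 1 then (u ⟨(k : ℕ), h⟩ : Fin d → ℤ) else wb (k : ℕ)) - Q|
        ≤ Cstar * ν ^ (m - 1) := by
      intro u hu
      have husum : (∑ k : Fin (n - m + 1), (u k : Fin d → ℤ))
          = ∑ k ∈ range (n - m + 1), wb k := (Finset.mem_filter.mp hu).2
      have h1 := hexp (fun k : ℕ =>
        if h : k < n - m + 1 then (u ⟨k, h⟩ : Fin d → ℤ) else wb k)
        (hadm u) (n - m + 1) n hlt
      rw [he] at h1
      have hsum : (∑ k ∈ range (n - m + 1),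
          if h : k < n - m + 1 then (u ⟨k, h⟩ : Fin d → ℤ) else wb k) = z := by
        rw [hz, ← husum, ← Fin.sum_univ_eq_sum_range]
        refine Finset.sum_congr rfl fun i _ => ?_
        rw [dif_pos i.isLt]
      have htail1 : (fun k : Fin (m - 1 + 1) =>
          if h : (n - m + 1) + (k : ℕ) < n - m + 1 then (u ⟨(n - m + 1) + (k : ℕ), h⟩ : Fin d → ℤ)
          else wb ((n - m + 1) + (k : ℕ)))
          = fun k : Fin (m - 1 + 1) => wb ((n - m + 1) + (k : ℕ)) :=
        funext fun k => dif_neg (by omega)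
      have htail2 : (fun k : Fin (m - 1) =>
          if h : (n - m + 1) + (k : ℕ) < n - m + 1 then (u ⟨(n - m + 1) + (k : ℕ), h⟩ : Fin d → ℤ)
          else wb ((n - m + 1) + (k : ℕ)))
          = fun k : Fin (m - 1) => wb ((n - m + 1) + (k : ℕ)) :=
        funext fun k => dif_neg (by omega)
      simp only [hsum, htail1, htail2] at h1
      exact h1
    have hmain := avg_bound hne
      (fun u => p ω (List.ofFn fun k : Fin (n + 1) =>
        if h : (k : ℕ) < n - m + 1 then (u ⟨(k : ℕ), h⟩ : Fin d → ℤ) else wb (k : ℕ)))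
      (fun u => p ω (List.ofFn fun k : Fin n =>
        if h : (k : ℕ) < n - m + 1 then (u ⟨(k : ℕ), h⟩ : Fin d → ℤ) else wb (k : ℕ)))
      hbpos Q (Cstar * ν ^ (m - 1)) hQu
    have htri := abs_sub_le
      ((∑ u ∈ F, p ω (List.ofFn fun k : Fin (n + 1) =>
        if h : (k : ℕ) < n - m + 1 then (u ⟨(k : ℕ), h⟩ : Fin d → ℤ) else wb (k : ℕ))) /
        (∑ u ∈ F, p ω (List.ofFn fun k : Fin n =>
        if h : (k : ℕ) < n - m + 1 then (u ⟨(k : ℕ), h⟩ : Fin d → ℤ) else wb (k : ℕ))))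
      Q
      (p ω (List.ofFn fun k : Fin (n + 1) => wb (k : ℕ)) /
        p ω (List.ofFn fun k : Fin n => wb (k : ℕ)))
    have habs : |Q - p ω (List.ofFn fun k : Fin (n + 1) => wb (k : ℕ)) /
        p ω (List.ofFn fun k : Fin n => wb (k : ℕ))| ≤ Cstar * ν ^ (m - 1) := by
      rw [abs_sub_comm]
      exact h0
    have hCν : 2 * (Cstar * ν ^ (m - 1)) ≤ (2 * Cstar + 1) / ν * ν ^ m := by
      have hm' : m = (m - 1) + 1 := by omega
      have : (2 * Cstar + 1) / ν * ν ^ m = (2 * Cstar + 1) * ν ^ (m - 1) := by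
        rw [hm', pow_succ, Nat.add_sub_cancel]
        field_simp
      rw [this]
      have := pow_nonneg hν0.le (m - 1)
      nlinarith
    calc _ ≤ _ := htri
      _ ≤ Cstar * ν ^ (m - 1) + Cstar * ν ^ (m - 1) := add_le_add hmain habs
      _ ≤ _ := by linarith
end

section
/- Let d = 1 and suppose the assumptions of the ergodicity theorem hold (so (Ω*, F*, Q*) is ergodic and z_n/n → V a.s.). If V = 0, then the walk is recurrent: z_n = 0 for infinitely many n, P*-almost surely. -/
open MeasureTheory Filter

/-- The shift map of the environment seen from the particle in dimension one. -/
def FstarZ {A : Type*} (q : (ℤ → A) × (ℕ → ℤ)) : (ℤ → A) × (ℕ → ℤ) :=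
  ((fun v => q.1 (v + q.2 0)), fun k => q.2 (k + 1))

section Maximal
open Finset Function

variable {α : Type*} [MeasurableSpace α] {μ : Measure α} {T : α → α} {f : α → ℝ}

lemma measurable_birkhoffSum (hT : Measurable T) (hf : Measurable f) (n : ℕ) :
    Measurable (birkhoffSum T f n) := by
  unfold birkhoffSum
  exact Finset.measurable_sum _ fun k _ => hf.comp (hT.iterate k)

lemma integrable_birkhoffSum (hT : MeasurePreserving T μ μ) (hf : Integrable f μ) (n : ℕ) :
    Integrable (birkhoffSum T f n) μ := by
  unfold birkhoffSum
  exact integrable_finset_sum _ fun k _ => (hT.iterate k).integrable_comp hf.aestronglyMeasurable |>.mpr hf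

/-- running maximum of `birkhoffSum T f (k+1)` for `k ≤ n`. -/
noncomputable def maxS (T : α → α) (f : α → ℝ) : ℕ → α → ℝ
  | 0 => f
  | n + 1 => fun x => max (maxS T f n x) (birkhoffSum T f (n + 2) x)

lemma measurable_maxS (hT : Measurable T) (hf : Measurable f) (n : ℕ) :
    Measurable (maxS T f n) := by
  induction n with
  | zero => exact hf
  | succ n ih => exact ih.max (measurable_birkhoffSum hT hf (n+2))

lemma integrable_maxS (hT : MeasurePreserving T μ μ) (hf : Integrable f μ) (n : ℕ) :
    Integrable (maxS T f n) μ := by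
  induction n with
  | zero => exact hf
  | succ n ih =>
      have h2 := ih.sup (integrable_birkhoffSum hT hf (n+2))
      have : maxS T f (n+1) = fun x => maxS T f n x ⊔ birkhoffSum T f (n+2) x := by
        funext x; simp [maxS, max_def]
      rw [this]; exact h2

lemma le_maxS (T : α → α) (f : α → ℝ) {k n : ℕ} (h : k ≤ n) (x : α) :
    birkhoffSum T f (k + 1) x ≤ maxS T f n x := by
  induction n with
  | zero => simp_all [maxS, Nat.le_zero.mp h, birkhoffSum_one]
  | succ n ih =>
      rcases Nat.lt_or_ge k (n+1) with h' | h'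
      · exact le_trans (ih (Nat.lt_succ_iff.mp h')) (le_max_left _ _)
      · have : k = n + 1 := le_antisymm h h'
        subst this
        exact le_max_right _ _

lemma maxS_le_succ (T : α → α) (f : α → ℝ) (n : ℕ) (x : α) :
    maxS T f n x ≤ maxS T f (n+1) x := le_max_left _ _

lemma maxS_succ_eq (T : α → α) (f : α → ℝ) (n : ℕ) (x : α) :
    maxS T f (n + 1) x = f x + max 0 (maxS T f n (T x)) := by
  induction n with
  | zero =>
      show max (f x) (birkhoffSum T f 2 x) = _
      have h2 : birkhoffSum T f 2 x = f x + f (T x) := by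
        rw [birkhoffSum_succ' T f 1 x, birkhoffSum_one]
      rw [h2]
      show max (f x) (f x + f (T x)) = f x + max 0 (f (T x))
      rcases le_total 0 (f (T x)) with h | h
      · rw [max_eq_right h, max_eq_right (by linarith)]
      · rw [max_eq_left h, max_eq_left (by linarith), add_zero]
  | succ n ih =>
      show max (maxS T f (n+1) x) (birkhoffSum T f (n+3) x) = _
      rw [ih, birkhoffSum_succ' T f (n+2) x]
      show _ = f x + max 0 (max (maxS T f n (T x)) (birkhoffSum T f (n+2) (T x)))
      simp only [← max_add_add_left, max_assoc]

theorem maximal_ergodic [IsProbabilityMeasure μ] (hT : MeasurePreserving T μ μ)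
    (hfm : Measurable f) (hf : Integrable f μ)
    (h : ∀ᵐ x ∂μ, ∃ n, 0 < birkhoffSum T f (n + 1) x) : 0 ≤ ∫ x, f x ∂μ := by
  set M := maxS T f with hM
  have hMm : ∀ n, Measurable (M n) := measurable_maxS hT.measurable hfm
  have hMi : ∀ n, Integrable (M n) μ := integrable_maxS hT hf
  set E := fun n => {x | 0 < M n x} with hE
  have hEm : ∀ n, MeasurableSet (E n) := fun n => measurableSet_lt measurable_const (hMm n)
  have hMmono : ∀ x, Monotone fun n => M n x := fun x =>
    monotone_nat_of_le_succ fun n => maxS_le_succ T f n x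
  have hEmono : Monotone E := fun m n hmn x hx => lt_of_lt_of_le hx (hMmono x hmn)
  have key : ∀ n, 0 ≤ ∫ x in E n, f x ∂μ := by
    intro n
    set g1 := fun x => max (M n x) 0 with hg1
    set g2 := fun x => max (M n (T x)) 0 with hg2
    have hg1i : Integrable g1 μ := (hMi n).pos_part
    have hg1m : Measurable g1 := (hMm n).max measurable_const
    have hg2i : Integrable g2 μ :=
      (hT.integrable_comp hg1i.aestronglyMeasurable).mpr hg1i
    have hkey1 : ∀ x, M n x - g2 x ≤ f x := by
      intro x
      have h1 := maxS_succ_eq T f n x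
      have h2 := maxS_le_succ T f n x
      have h3 : max 0 (M n (T x)) = g2 x := max_comm _ _
      rw [h3] at h1
      show M n x - g2 x ≤ f x
      calc M n x - g2 x ≤ M (n+1) x - g2 x := by linarith
        _ = f x := by simp only [hM]; rw [h1]; ring
    have e1 : ∫ x in E n, M n x ∂μ = ∫ x, g1 x ∂μ := by
      rw [← integral_indicator (hEm n)]
      congr 1
      funext x
      rcases lt_or_ge 0 (M n x) with hx | hx
      · rw [Set.indicator_of_mem (show x ∈ E n from hx)]; exact (max_eq_left hx.le).symm
      · rw [Set.indicator_of_notMem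
          (show x ∉ E n by simp only [hE, Set.mem_setOf_eq, not_lt]; exact hx)]
        exact (max_eq_right hx).symm
    have e2 : ∫ x in E n, g2 x ∂μ ≤ ∫ x, g2 x ∂μ :=
      setIntegral_le_integral hg2i (Eventually.of_forall fun x => le_max_right _ _)
    have e3 : ∫ x, g2 x ∂μ = ∫ x, g1 x ∂μ := by
      have := integral_map (μ := μ) hT.measurable.aemeasurable
        (f := g1) (hT.map_eq.symm ▸ hg1i.aestronglyMeasurable)
      rw [hT.map_eq] at this
      exact this.symm
    have e4 : ∫ x in E n, M n x ∂μ - ∫ x in E n, g2 x ∂μ ≤ ∫ x in E n, f x ∂μ := by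
      rw [← integral_sub (hMi n).integrableOn hg2i.integrableOn]
      exact setIntegral_mono ((hMi n).sub hg2i).integrableOn hf.integrableOn
        fun x => hkey1 x
    linarith
  have hU : ∀ᵐ x ∂μ, x ∈ ⋃ n, E n := by
    refine h.mono fun x hx => ?_
    obtain ⟨n, hn⟩ := hx
    exact Set.mem_iUnion.2 ⟨n, lt_of_lt_of_le hn (le_maxS T f le_rfl x)⟩
  have hlim := tendsto_setIntegral_of_monotone hEm hEmono hf.integrableOn
  have heq : ∫ x in ⋃ n, E n, f x ∂μ = ∫ x, f x ∂μ := by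
    have huniv : (⋃ n, E n) =ᵐ[μ] (Set.univ : Set α) := eventuallyEq_univ.mpr hU
    rw [Measure.restrict_congr_set huniv, Measure.restrict_univ]
  rw [← heq]
  exact ge_of_tendsto hlim (Eventually.of_forall key)

theorem birkhoff_upper [IsProbabilityMeasure μ] (hErg : Ergodic T μ)
    (hfm : Measurable f) (hf : Integrable f μ) {c : ℝ} (hc : ∫ x, f x ∂μ < c) :
    ∀ᵐ x ∂μ, ∀ᶠ n in atTop, birkhoffSum T f n x < c * n := by
  have hT : MeasurePreserving T μ μ := hErg.toMeasurePreserving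
  set E : Set α :=
    {x | ∀ r : ℚ, (r : ℝ) < c → ∃ᶠ n in atTop, (r : ℝ) * n < birkhoffSum T f n x} with hEdef
  have hSm : ∀ n, Measurable (birkhoffSum T f n) := measurable_birkhoffSum hT.measurable hfm
  have hinv : T ⁻¹' E = E := by
    ext x
    simp only [Set.mem_preimage, hEdef, Set.mem_setOf_eq]
    constructor
    · -- T x ∈ E → x ∈ E
      intro hx r hr
      obtain ⟨r', hr1, hr2⟩ := exists_rat_btwn hr
      have freq := hx r' hr2
      rw [frequently_atTop] at freq ⊢
      intro N
      obtain ⟨K₀, hK₀⟩ := exists_nat_ge (((r : ℝ) - f x) / ((r' : ℝ) - r))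
      obtain ⟨n, hn1, hn2⟩ := freq (max N K₀)
      refine ⟨n + 1, le_trans (le_trans (le_max_left _ _) hn1) (Nat.le_succ n), ?_⟩
      have hd : (0 : ℝ) < (r' : ℝ) - r := by exact_mod_cast sub_pos.mpr hr1
      have hK : (r : ℝ) - f x ≤ ((r' : ℝ) - r) * K₀ := by
        rw [div_le_iff₀ hd] at hK₀; linarith [hK₀]
      have hnK : (K₀ : ℝ) ≤ n := by exact_mod_cast le_trans (le_max_right N K₀) hn1
      have hmono : ((r' : ℝ) - r) * K₀ ≤ ((r' : ℝ) - r) * n :=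
        mul_le_mul_of_nonneg_left hnK hd.le
      have hS : birkhoffSum T f (n + 1) x = f x + birkhoffSum T f n (T x) :=
        birkhoffSum_succ' T f n x
      push_cast
      rw [hS]
      have : (r' : ℝ) * n < birkhoffSum T f n (T x) := hn2
      nlinarith [this]
    · -- x ∈ E → T x ∈ E
      intro hx r hr
      obtain ⟨r', hr1, hr2⟩ := exists_rat_btwn hr
      have freq := hx r' hr2
      rw [frequently_atTop] at freq ⊢
      intro N
      obtain ⟨K₀, hK₀⟩ := exists_nat_ge ((f x - (r' : ℝ)) / ((r' : ℝ) - r))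
      obtain ⟨m, hm1, hm2⟩ := freq (max N K₀ + 1)
      obtain ⟨n, rfl⟩ : ∃ n, m = n + 1 :=
        ⟨m - 1, (Nat.succ_pred_eq_of_pos (lt_of_lt_of_le (Nat.succ_pos _) hm1)).symm⟩
      refine ⟨n, by omega, ?_⟩
      have hd : (0 : ℝ) < (r' : ℝ) - r := by exact_mod_cast sub_pos.mpr hr1
      have hK : f x - (r' : ℝ) ≤ ((r' : ℝ) - r) * K₀ := by
        rw [div_le_iff₀ hd] at hK₀; linarith [hK₀]
      have hnK : (K₀ : ℝ) ≤ n := by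
        have : K₀ ≤ n := by omega
        exact_mod_cast this
      have hmono : ((r' : ℝ) - r) * K₀ ≤ ((r' : ℝ) - r) * n :=
        mul_le_mul_of_nonneg_left hnK hd.le
      have hS : birkhoffSum T f (n + 1) x = f x + birkhoffSum T f n (T x) :=
        birkhoffSum_succ' T f n x
      have h2 : (r' : ℝ) * (n + 1) < birkhoffSum T f (n + 1) x := by
        have := hm2; push_cast at this ⊢; linarith [this]
      rw [hS] at h2
      nlinarith [h2]
  have hEm : MeasurableSet E := by
    have hrw : E = ⋂ (r : ℚ), ⋂ (_ : (r : ℝ) < c), ⋂ (N : ℕ), ⋃ (n : ℕ), ⋃ (_ : N ≤ n),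
        {x | (r : ℝ) * n < birkhoffSum T f n x} := by
      ext x
      simp only [hEdef, Set.mem_setOf_eq, Set.mem_iInter, Set.mem_iUnion, frequently_atTop,
        exists_prop, ge_iff_le]
    rw [hrw]
    exact MeasurableSet.iInter fun r => MeasurableSet.iInter fun _ =>
      MeasurableSet.iInter fun N => MeasurableSet.iUnion fun n =>
      MeasurableSet.iUnion fun _ => measurableSet_lt measurable_const (hSm n)
  rcases hErg.ae_empty_or_univ hEm hinv with hE0 | hE1
  · -- E a.e. empty : conclusion
    have hae : ∀ᵐ x ∂μ, x ∉ E := by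
      have : μ E = 0 := by rwa [← ae_eq_empty]
      exact measure_eq_zero_iff_ae_notMem.mp this
    refine hae.mono fun x hx => ?_
    simp only [hEdef, Set.mem_setOf_eq] at hx
    push_neg at hx
    obtain ⟨r, hr1, hr2⟩ := hx
    filter_upwards [hr2, eventually_ge_atTop 1] with n h1 h2
    have hn : (0 : ℝ) < n := by exact_mod_cast h2
    calc birkhoffSum T f n x ≤ (r : ℝ) * n := h1
      _ < c * n := by exact mul_lt_mul_of_pos_right hr1 hn
  · -- E a.e. univ : contradiction with maximal ergodic theorem
    exfalso
    obtain ⟨q, hq1, hq2⟩ := exists_rat_btwn hc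
    set g := fun x => f x - q with hg
    have hgm : Measurable g := hfm.sub measurable_const
    have hgi : Integrable g μ := hf.sub (integrable_const _)
    have hSg : ∀ (n : ℕ) x, birkhoffSum T g n x = birkhoffSum T f n x - n * q := by
      intro n x
      simp only [birkhoffSum, hg, Finset.sum_sub_distrib, Finset.sum_const, Finset.card_range,
        nsmul_eq_mul]
    have hae : ∀ᵐ x ∂μ, x ∈ E := eventuallyEq_univ.mp hE1
    have hmax : ∀ᵐ x ∂μ, ∃ n, 0 < birkhoffSum T g (n + 1) x := by
      refine hae.mono fun x hx => ?_
      have freq := hx q hq2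
      rw [frequently_atTop] at freq
      obtain ⟨n, hn1, hn2⟩ := freq 1
      obtain ⟨m, rfl⟩ : ∃ m, n = m + 1 :=
        ⟨n - 1, (Nat.succ_pred_eq_of_pos hn1).symm⟩
      exact ⟨m, by rw [hSg]; linarith [hn2]⟩
    have h0 := maximal_ergodic hT hgm hgi hmax
    have : ∫ x, g x ∂μ = ∫ x, f x ∂μ - q := by
      rw [hg]
      rw [integral_sub hf (integrable_const _), integral_const]
      simp
    rw [this] at h0
    linarith

theorem birkhoff_lower [IsProbabilityMeasure μ] (hErg : Ergodic T μ)
    (hfm : Measurable f) (hf : Integrable f μ) {c : ℝ} (hc : c < ∫ x, f x ∂μ) :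
    ∀ᵐ x ∂μ, ∀ᶠ n in atTop, c * n < birkhoffSum T f n x := by
  have hneg := birkhoff_upper hErg hfm.neg hf.neg (c := -c)
    (by show ∫ x, -f x ∂μ < -c; rw [integral_neg]; linarith)
  refine hneg.mono fun x hx => hx.mono fun n hn => ?_
  have he : birkhoffSum T (-f) n x = -birkhoffSum T f n x := by
    simp [birkhoffSum, Finset.sum_neg_distrib]
  rw [he] at hn; linarith

end Maximal

lemma FstarZ_iterate_snd {A : Type*} (q : (ℤ → A) × (ℕ → ℤ)) (k m : ℕ) :
    (FstarZ^[k] q).2 m = q.2 (m + k) := by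
  induction k generalizing q m with
  | zero => simp
  | succ k ih =>
      rw [Function.iterate_succ_apply, ih]
      show q.2 (m + k + 1) = q.2 (m + (k + 1))
      congr 1

/-- In dimension `d = 1`, if `(Ω*, F*, Q*)` is ergodic and measure
preserving, `Q*` is equivalent to `P*`, and the drift `V = ∫ w̄₀ dQ*` vanishes, then the
walk `z_n = w̄₀ + … + w̄_{n−1}` is recurrent: `z_n = 0` infinitely often, `P*`-a.s. -/
theorem stmt14 {A : Type*} [MeasurableSpace A]
    (Pstar Qstar : Measure ((ℤ → A) × (ℕ → ℤ)))
    [IsProbabilityMeasure Pstar] [IsProbabilityMeasure Qstar]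
    (hMP : MeasurePreserving FstarZ Qstar Qstar)
    (hErg : Ergodic FstarZ Qstar)
    (hQP : Qstar ≪ Pstar) (hPQ : Pstar ≪ Qstar)
    (hInt : Integrable (fun q : (ℤ → A) × (ℕ → ℤ) => ((q.2 0 : ℤ) : ℝ)) Qstar)
    (hV : ∫ q : (ℤ → A) × (ℕ → ℤ), ((q.2 0 : ℤ) : ℝ) ∂Qstar = 0) :
    ∀ᵐ q ∂Pstar, {n : ℕ | (∑ k ∈ Finset.range n, q.2 k) = 0}.Infinite := by
  classical
  set α := (ℤ → A) × (ℕ → ℤ)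
  set T : α → α := FstarZ with hTdef
  set g : α → ℤ := fun q => q.2 0 with hgdef
  set φ : α → ℝ := fun q => ((g q : ℤ) : ℝ) with hφdef
  have hφm : Measurable φ :=
    (measurable_of_countable (fun z : ℤ => ((z : ℤ) : ℝ))).comp
      ((measurable_pi_apply 0).comp measurable_snd)
  have hζ : ∀ (n : ℕ) (q : α), birkhoffSum T φ n q = ((birkhoffSum T g n q : ℤ) : ℝ) := by
    intro n q
    simp only [birkhoffSum, hφdef]
    push_cast
    try rfl
  have hwalk : ∀ (n : ℕ) (q : α), birkhoffSum T g n q = ∑ k ∈ Finset.range n, q.2 k := by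
    intro n q
    refine Finset.sum_congr rfl fun k _ => ?_
    show (FstarZ^[k] q).2 0 = q.2 k
    rw [FstarZ_iterate_snd, Nat.zero_add]
  set R : Set α := {x | ∀ m : ℕ, birkhoffSum T φ (m + 1) x ≠ 0} with hRdef
  have hSm : ∀ n, Measurable (birkhoffSum T φ n) :=
    measurable_birkhoffSum hMP.measurable hφm
  have hRm : MeasurableSet R := by
    have : R = ⋂ m : ℕ, (birkhoffSum T φ (m + 1) ⁻¹' {0})ᶜ := by
      ext x; simp [hRdef]
    rw [this]
    exact MeasurableSet.iInter fun m => ((hSm (m + 1)) (measurableSet_singleton 0)).compl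
  have hR0 : Qstar R = 0 := by
    by_contra hR0
    set ρ := (Qstar R).toReal with hρdef
    have hρ : 0 < ρ := ENNReal.toReal_pos hR0 (measure_ne_top _ _)
    set ind : α → ℝ := R.indicator (fun _ => (1 : ℝ)) with hinddef
    have hindm : Measurable ind := measurable_const.indicator hRm
    have hindi : Integrable ind Qstar := (integrable_const 1).indicator hRm
    have hint : ∫ x, ind x ∂Qstar = ρ := by
      rw [hinddef, integral_indicator_const _ hRm, smul_eq_mul, mul_one]; rfl
    have hcount := birkhoff_lower hErg hindm hindi (c := ρ / 2) (by rw [hint]; linarith)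
    have hup := birkhoff_upper hErg hφm hInt (c := ρ / 8) (by rw [hV]; linarith)
    have hlo := birkhoff_lower hErg hφm hInt (c := -(ρ / 8)) (by rw [hV]; linarith)
    have hfalse : ∀ᵐ x ∂Qstar, False := by
      filter_upwards [hcount, hup, hlo] with x h1 h2 h3
      obtain ⟨J₁, hJ₁⟩ := eventually_atTop.mp h1
      obtain ⟨J₂, hJ₂⟩ := eventually_atTop.mp (h2.and h3)
      set C : ℕ := (Finset.range J₂).sup (fun j => (birkhoffSum T g j x).natAbs) with hC
      obtain ⟨N₂, hN₂⟩ := exists_nat_ge ((2 * (C : ℝ) + 3) / (ρ / 4))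
      set n := max (max J₁ J₂) (N₂ + 1) with hn
      set F := (Finset.range n).filter (fun k => T^[k] x ∈ R) with hF
      have hcard : birkhoffSum T ind n x = (F.card : ℝ) := by
        rw [birkhoffSum, hF, ← Finset.sum_boole]
        refine Finset.sum_congr rfl fun k _ => ?_
        simp [hinddef, Set.indicator_apply]
      have h1n : ρ / 2 * n < (F.card : ℝ) := by
        rw [← hcard]
        exact hJ₁ n (le_trans (le_max_left _ _) (le_max_left _ _))
      set B : ℤ := (C : ℤ) + ⌈ρ / 8 * (n : ℝ)⌉ with hB
      have hBnn : (0 : ℤ) ≤ ⌈ρ / 8 * (n : ℝ)⌉ := Int.ceil_nonneg (by positivity)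
      have hCnn : (0 : ℤ) ≤ (C : ℤ) := Int.natCast_nonneg C
      have hmem : ∀ j ∈ Finset.range n, birkhoffSum T g j x ∈ Finset.Icc (-B) B := by
        intro j hj
        have habs : |birkhoffSum T g j x| ≤ B := by
          rcases Nat.lt_or_ge j J₂ with hjJ | hjJ
          · have h1' : (birkhoffSum T g j x).natAbs ≤ C :=
              Finset.le_sup (f := fun j => (birkhoffSum T g j x).natAbs)
                (Finset.mem_range.mpr hjJ)
            calc |birkhoffSum T g j x| = ((birkhoffSum T g j x).natAbs : ℤ) :=
                  Int.abs_eq_natAbs _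
              _ ≤ (C : ℤ) := by exact_mod_cast h1'
              _ ≤ B := le_add_of_nonneg_right hBnn
          · have h2' := (hJ₂ j hjJ).1
            have h3' := (hJ₂ j hjJ).2
            have hjn : (j : ℝ) ≤ (n : ℝ) := by
              exact_mod_cast (Finset.mem_range.mp hj).le
            have habsR : |((birkhoffSum T g j x : ℤ) : ℝ)| ≤ ρ / 8 * n := by
              rw [← hζ, abs_le]
              constructor
              · nlinarith [h3']
              · nlinarith [h2']
            have hle : ((|birkhoffSum T g j x| : ℤ) : ℝ) ≤ (B : ℝ) := by
              have e1 : ((|birkhoffSum T g j x| : ℤ) : ℝ)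
                  = |((birkhoffSum T g j x : ℤ) : ℝ)| := by push_cast; rfl
              have e2 : ρ / 8 * (n:ℝ) ≤ (⌈ρ / 8 * (n : ℝ)⌉ : ℝ) := Int.le_ceil _
              have e3 : (0:ℝ) ≤ (C : ℝ) := by positivity
              have e4 : (B : ℝ) = (C : ℝ) + (⌈ρ / 8 * (n : ℝ)⌉ : ℝ) := by
                rw [hB]; push_cast; ring
              rw [e1, e4]
              linarith [habsR]
            exact_mod_cast hle
        rw [Finset.mem_Icc]
        exact abs_le.mp habs
      have hinj : Set.InjOn (fun k => birkhoffSum T g k x) F := by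
        have key : ∀ i j : ℕ, i < j → T^[i] x ∈ R →
            birkhoffSum T g i x ≠ birkhoffSum T g j x := by
          intro i j hij hiR heq
          have hdec : j = i + ((j - i - 1) + 1) := by omega
          rw [hdec, birkhoffSum_add] at heq
          have hz : birkhoffSum T g ((j - i - 1) + 1) (T^[i] x) = 0 :=
            (left_eq_add.mp heq)
          have hne := hiR (j - i - 1)
          apply hne
          rw [hζ, hz]
          simp
        intro i hi j hj hij
        by_contra hne
        rcases lt_or_gt_of_ne hne with h | h
        · exact key i j h ((Finset.mem_filter.mp hi).2) hij
        · exact key j i h ((Finset.mem_filter.mp hj).2) hij.symm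
      have hcardle : F.card ≤ (Finset.Icc (-B) B).card :=
        Finset.card_le_card_of_injOn _ (fun k hk => hmem k (Finset.mem_filter.mp hk).1) hinj
      have hIcc : ((Finset.Icc (-B) B).card : ℝ) ≤ 2 * (B : ℝ) + 1 := by
        rw [Int.card_Icc]
        have h2B : (B + 1 - -B) = 2 * B + 1 := by ring
        rw [h2B]
        have := Int.toNat_of_nonneg (show (0:ℤ) ≤ 2 * B + 1 by
          rw [hB]; omega)
        have hcast : (((2 * B + 1).toNat : ℤ) : ℝ) = ((2 * B + 1 : ℤ) : ℝ) := by
          rw [this]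
        push_cast at hcast ⊢
        linarith [le_of_eq hcast]
      have hceil : (⌈ρ / 8 * (n : ℝ)⌉ : ℝ) < ρ / 8 * n + 1 := Int.ceil_lt_add_one _
      have hBr : (B : ℝ) = (C : ℝ) + (⌈ρ / 8 * (n : ℝ)⌉ : ℝ) := by rw [hB]; push_cast; ring
      have hn1 : (N₂ : ℝ) + 1 ≤ (n : ℝ) := by
        have : N₂ + 1 ≤ n := le_max_right _ _
        exact_mod_cast this
      have hN₂' : 2 * (C : ℝ) + 3 ≤ ρ / 4 * N₂ := by
        rw [div_le_iff₀ (by positivity : (0:ℝ) < ρ / 4)] at hN₂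
        linarith [hN₂]
      have hFle : (F.card : ℝ) ≤ 2 * (B : ℝ) + 1 :=
        le_trans (by exact_mod_cast hcardle) hIcc
      nlinarith [h1n, hFle, hceil, hBr, hn1, hN₂', hρ]
    rw [ae_iff] at hfalse
    simp [measure_univ] at hfalse
  have hae1 : ∀ᵐ x ∂Qstar, ∀ k : ℕ, T^[k] x ∉ R := by
    rw [MeasureTheory.ae_all_iff]
    intro k
    have hz : Qstar (T^[k] ⁻¹' R) = 0 := by
      rw [(hMP.iterate k).measure_preimage hRm.nullMeasurableSet, hR0]
    exact (measure_eq_zero_iff_ae_notMem.mp hz).mono fun x hx => by simpa using hx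
  have hQae : ∀ᵐ x ∂Qstar, {n : ℕ | (∑ k ∈ Finset.range n, x.2 k) = 0}.Infinite := by
    refine hae1.mono fun x hx => ?_
    have hzero : ∀ n : ℕ, birkhoffSum T φ n x = 0 →
        ∃ m, n < m ∧ birkhoffSum T φ m x = 0 := by
      intro n hn
      have hxn := hx n
      simp only [hRdef, Set.mem_setOf_eq, not_forall, not_not] at hxn
      obtain ⟨m, hm⟩ := hxn
      refine ⟨n + (m + 1), by omega, ?_⟩
      rw [birkhoffSum_add, hn, hm, add_zero]
    have hstep : ∀ a : ℕ, ∃ b, a < b ∧ birkhoffSum T φ b x = 0 := by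
      intro a
      induction a with
      | zero => exact hzero 0 (birkhoffSum_zero T φ x)
      | succ a ih =>
          obtain ⟨b, hb1, hb2⟩ := ih
          rcases Nat.lt_or_ge (a + 1) b with h | h
          · exact ⟨b, h, hb2⟩
          · have hba : b = a + 1 := by omega
            subst hba
            exact hzero (a + 1) hb2
    refine Set.infinite_of_forall_exists_gt fun a => ?_
    obtain ⟨b, hb1, hb2⟩ := hstep a
    refine ⟨b, ?_, hb1⟩
    show (∑ k ∈ Finset.range b, x.2 k) = 0
    have hcast : ((birkhoffSum T g b x : ℤ) : ℝ) = 0 := by rw [← hζ]; exact hb2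
    have h0 : birkhoffSum T g b x = 0 := by exact_mod_cast hcast
    rw [← hwalk b x]
    exact h0
  exact hQae.filter_mono hPQ.ae_le
end

section
/- For the β-transformation cocycle: each map φ_n^{x,σ}(β) = T_σ^n(x) (viewing the n-th image of x ∈ (0,1] as a function of the parameter β, where T_{σ_i}(y) = β_{σ_i} y mod 1 with β_{σ_i} ∈ {β, ϖβ}) is C¹ and strictly increasing on each parameter interval I_{i_1,…,i_n}^{x,σ} on which all the integer parts ⌊β_{σ_k} φ_{k−1}^{x,σ}(β)⌋ = i_k are constant, and its derivative satisfies (φ_n^{x,σ})'(β) ≥ β^{n−1} x. -/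
/-- The parameter-dependent orbit `φ_n^{x,σ}(β) = T_σ^n(x)` for β-transformations
`T(y) = β' y mod 1` with `β' = ϖβ` or `β` according to `σ`. -/
noncomputable def phiBeta (w x : ℝ) (σ : ℕ → Bool) : ℕ → ℝ → ℝ
  | 0, _ => x
  | n + 1, β => Int.fract ((if σ (n + 1) = true then w * β else β) * phiBeta w x σ n β)

/-- The set of parameters where the first `n` digits are locked to `i`. -/
def lockSet (w x : ℝ) (σ : ℕ → Bool) (i : ℕ → ℤ) (n : ℕ) : Set ℝ :=
  {β : ℝ | 1 < β ∧ ∀ k < n,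
    ⌊(if σ (k + 1) = true then w * β else β) * phiBeta w x σ k β⌋ = i k}

/-- The derivative of `β ↦ φ_n^{x,σ}(β)` on the lock set. -/
noncomputable def Dfun (w x : ℝ) (σ : ℕ → Bool) : ℕ → ℝ → ℝ
  | 0, _ => 0
  | n + 1, β => (if σ (n + 1) = true then w else 1) * phiBeta w x σ n β
      + (if σ (n + 1) = true then w * β else β) * Dfun w x σ n β

lemma phi_nonneg (w x : ℝ) (σ : ℕ → Bool) (hx0 : 0 < x) (n : ℕ) (β : ℝ) :
    0 ≤ phiBeta w x σ n β := by
  cases n with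
  | zero => exact hx0.le
  | succ n => exact Int.fract_nonneg _

lemma lockSet_mono (w x : ℝ) (σ : ℕ → Bool) (i : ℕ → ℤ) (n : ℕ) :
    lockSet w x σ i (n + 1) ⊆ lockSet w x σ i n :=
  fun β hβ => ⟨hβ.1, fun k hk => hβ.2 k (Nat.lt_succ_of_lt hk)⟩

lemma main_lemma (w x : ℝ) (hw : 1 < w) (hx0 : 0 < x) (σ : ℕ → Bool) (i : ℕ → ℤ) :
    ∀ n : ℕ,
    (lockSet w x σ i n).OrdConnected ∧
    MonotoneOn (phiBeta w x σ n) (lockSet w x σ i n) ∧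
    (1 ≤ n → StrictMonoOn (phiBeta w x σ n) (lockSet w x σ i n)) ∧
    ContinuousOn (Dfun w x σ n) (lockSet w x σ i n) ∧
    ∀ β ∈ lockSet w x σ i n,
      HasDerivWithinAt (phiBeta w x σ n) (Dfun w x σ n β) (lockSet w x σ i n) β ∧
      0 ≤ Dfun w x σ n β ∧
      (1 ≤ n → β ^ (n - 1) * x ≤ Dfun w x σ n β) := by
  intro n
  induction n with
  | zero =>
    have hconst : phiBeta w x σ 0 = fun _ : ℝ => x := by funext β; rfl
    refine ⟨⟨fun a ha b hb c hc => ⟨lt_of_lt_of_le ha.1 hc.1,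
        fun k hk => absurd hk (Nat.not_lt_zero k)⟩⟩, ?_, ?_, ?_, ?_⟩
    · intro β1 _ β2 _ _; exact le_refl x
    · intro h; omega
    · have : Dfun w x σ 0 = fun _ : ℝ => 0 := by funext β; rfl
      rw [this]; exact continuousOn_const
    · intro β hβ
      refine ⟨?_, le_refl 0, fun h => by omega⟩
      rw [hconst]; exact hasDerivWithinAt_const β _ x
  | succ n ih =>
    obtain ⟨hOC, hMono, hStrict, hContD, hDeriv⟩ := ih
    set t := lockSet w x σ i n with ht
    set s := lockSet w x σ i (n + 1) with hs
    have hsub : s ⊆ t := lockSet_mono w x σ i n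
    -- basic facts about b
    have hb_ge : ∀ β : ℝ, 1 < β → β ≤ (if σ (n + 1) = true then w * β else β) := by
      intro β hβ; split
      · nlinarith
      · exact le_refl β
    have hb_strict : ∀ β1 β2 : ℝ, 0 < β1 → β1 < β2 →
        (if σ (n + 1) = true then w * β1 else β1) < (if σ (n + 1) = true then w * β2 else β2) := by
      intro β1 β2 h0 hlt; split
      · nlinarith
      · exact hlt
    have hb'_ge1 : (1 : ℝ) ≤ (if σ (n + 1) = true then w else 1) := by
      split
      · exact hw.le
      · exact le_refl 1
    -- positivity of φ_n at the larger point
    have hφpos : ∀ β1 ∈ t, ∀ β2 ∈ t, β1 < β2 → 0 < phiBeta w x σ n β2 := by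
      cases n with
      | zero => intro β1 _ β2 _ _; exact hx0
      | succ m =>
        intro β1 hβ1 β2 hβ2 hlt
        have h1 := hStrict (by omega) hβ1 hβ2 hlt
        have h2 := phi_nonneg w x σ hx0 (m + 1) β1
        linarith
    -- monotonicity of g = b * φ_n on t
    have hgmono : ∀ β1 ∈ t, ∀ β2 ∈ t, β1 ≤ β2 →
        (if σ (n + 1) = true then w * β1 else β1) * phiBeta w x σ n β1 ≤
        (if σ (n + 1) = true then w * β2 else β2) * phiBeta w x σ n β2 := by
      intro β1 hβ1 β2 hβ2 hle
      have h1 : (if σ (n + 1) = true then w * β1 else β1) ≤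
          (if σ (n + 1) = true then w * β2 else β2) := by
        rcases eq_or_lt_of_le hle with rfl | hlt
        · exact le_refl _
        · exact (hb_strict β1 β2 (by linarith [hβ1.1]) hlt).le
      have h2 := hMono hβ1 hβ2 hle
      have h3 := phi_nonneg w x σ hx0 n β1
      have h4 : (0 : ℝ) ≤ (if σ (n + 1) = true then w * β2 else β2) :=
        le_trans (by linarith [hβ2.1]) (hb_ge β2 hβ2.1)
      exact mul_le_mul h1 h2 h3 h4
    have hgstrict : ∀ β1 ∈ t, ∀ β2 ∈ t, β1 < β2 →
        (if σ (n + 1) = true then w * β1 else β1) * phiBeta w x σ n β1 <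
        (if σ (n + 1) = true then w * β2 else β2) * phiBeta w x σ n β2 := by
      intro β1 hβ1 β2 hβ2 hlt
      have h1 := hb_strict β1 β2 (by linarith [hβ1.1]) hlt
      have h2 := hMono hβ1 hβ2 hlt.le
      have h3 := phi_nonneg w x σ hx0 n β1
      have h4 := hφpos β1 hβ1 β2 hβ2 hlt
      have h5 : (1 : ℝ) < (if σ (n + 1) = true then w * β1 else β1) :=
        lt_of_lt_of_le hβ1.1 (hb_ge β1 hβ1.1)
      nlinarith
    -- φ_{n+1} = g - i n on s
    have heq : ∀ β ∈ s, phiBeta w x σ (n + 1) β =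
        (if σ (n + 1) = true then w * β else β) * phiBeta w x σ n β - i n := by
      intro β hβ
      have hfl := hβ.2 n (Nat.lt_succ_self n)
      show Int.fract _ = _
      rw [Int.fract, hfl]
    -- OrdConnected
    have hOCs : s.OrdConnected := by
      constructor
      intro β1 hβ1 β2 hβ2 β hβ
      have hβt : β ∈ t := hOC.out (hsub hβ1) (hsub hβ2) hβ
      refine ⟨hβt.1, fun k hk => ?_⟩
      rcases Nat.lt_succ_iff_lt_or_eq.mp hk with h | h
      · exact hβt.2 k h
      · subst h
        have e1 := hβ1.2 k (Nat.lt_succ_self k)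
        have e2 := hβ2.2 k (Nat.lt_succ_self k)
        have l1 : (i k : ℝ) ≤ (if σ (k + 1) = true then w * β1 else β1) * phiBeta w x σ k β1 := by
          rw [← e1]; exact Int.floor_le _
        have l2 : (if σ (k + 1) = true then w * β2 else β2) * phiBeta w x σ k β2 < i k + 1 := by
          rw [← e2]; push_cast; exact Int.lt_floor_add_one _
        have m1 := hgmono β1 (hsub hβ1) β hβt hβ.1
        have m2 := hgmono β hβt β2 (hsub hβ2) hβ.2
        refine Int.floor_eq_iff.mpr ⟨by linarith, by push_cast; linarith⟩
    -- strict monotonicity of φ_{n+1} on s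
    have hSMs : StrictMonoOn (phiBeta w x σ (n + 1)) s := by
      intro β1 hβ1 β2 hβ2 hlt
      rw [heq β1 hβ1, heq β2 hβ2]
      have := hgstrict β1 (hsub hβ1) β2 (hsub hβ2) hlt
      linarith
    refine ⟨hOCs, hSMs.monotoneOn, fun _ => hSMs, ?_, ?_⟩
    · -- continuity of Dfun (n+1)
      have hφcont : ContinuousOn (phiBeta w x σ n) t :=
        fun β hβ => ((hDeriv β hβ).1).continuousWithinAt
      show ContinuousOn (Dfun w x σ (n + 1)) s
      have hD1 : Dfun w x σ (n + 1) = fun β =>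
          (if σ (n + 1) = true then w else 1) * phiBeta w x σ n β
          + (if σ (n + 1) = true then w * β else β) * Dfun w x σ n β := by
        funext β; rfl
      rw [hD1]
      apply ContinuousOn.add
      · exact continuousOn_const.mul (hφcont.mono hsub)
      · apply ContinuousOn.mul _ (hContD.mono hsub)
        have : Continuous fun β : ℝ => (if σ (n + 1) = true then w * β else β) := by
          split
          · exact continuous_const.mul continuous_id
          · exact continuous_id
        exact this.continuousOn
    · intro β hβ
      -- derivative
      have hbd : HasDerivWithinAt (fun β : ℝ => if σ (n + 1) = true then w * β else β)
          (if σ (n + 1) = true then w else 1) s β := by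
        split
        · simpa using (hasDerivWithinAt_id β s).const_mul w
        · exact hasDerivWithinAt_id β s
      have hφd : HasDerivWithinAt (phiBeta w x σ n) (Dfun w x σ n β) s β :=
        ((hDeriv β (hsub hβ)).1).mono hsub
      have hgd := hbd.mul hφd
      have hgd' := hgd.sub_const (i n : ℝ)
      have hderiv : HasDerivWithinAt (phiBeta w x σ (n + 1)) (Dfun w x σ (n + 1) β) s β := by
        have := hgd'.congr (fun y hy => heq y hy) (heq β hβ)
        exact this
      have hφn := phi_nonneg w x σ hx0 n β
      have hDn := (hDeriv β (hsub hβ)).2.1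
      have hβ1 : (1 : ℝ) < β := hβ.1
      have hbge := hb_ge β hβ1
      have hDval : Dfun w x σ (n + 1) β =
          (if σ (n + 1) = true then w else 1) * phiBeta w x σ n β
          + (if σ (n + 1) = true then w * β else β) * Dfun w x σ n β := rfl
      have hnonneg : 0 ≤ Dfun w x σ (n + 1) β := by
        rw [hDval]
        have h4 : (0 : ℝ) ≤ (if σ (n + 1) = true then w * β else β) := by linarith
        exact add_nonneg (mul_nonneg (by linarith) hφn) (mul_nonneg h4 hDn)
      refine ⟨hderiv, hnonneg, fun _ => ?_⟩
      show β ^ (n + 1 - 1) * x ≤ Dfun w x σ (n + 1) β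
      rw [hDval]
      cases n with
      | zero =>
        have : phiBeta w x σ 0 β = x := rfl
        rw [this]
        simp only [pow_zero, Nat.add_sub_cancel, pow_one]
        have : Dfun w x σ 0 β = 0 := rfl
        rw [this]
        nlinarith
      | succ m =>
        have hbound := (hDeriv β (hsub hβ)).2.2 (by omega)
        have h1 : β ^ (m + 1) * x ≤ β * Dfun w x σ (m + 1) β := by
          have : β ^ (m + 1) * x = β * (β ^ (m + 1 - 1) * x) := by
            rw [Nat.add_sub_cancel, pow_succ]; ring
          rw [this]
          exact mul_le_mul_of_nonneg_left hbound (by linarith)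
        have h2 : β * Dfun w x σ (m + 1) β ≤
            (if σ (m + 1 + 1) = true then w * β else β) * Dfun w x σ (m + 1) β :=
          mul_le_mul_of_nonneg_right hbge hDn
        have h3 : (0 : ℝ) ≤ (if σ (m + 1 + 1) = true then w else 1) * phiBeta w x σ (m + 1) β :=
          mul_nonneg (by linarith) hφn
        simp only [Nat.add_sub_cancel]
        linarith

/-- Each map `β ↦ φ_n^{x,σ}(β)` is `C¹` and strictly increasing on each
parameter interval on which all integer parts `⌊β_{σ_k} φ_{k−1}^{x,σ}(β)⌋ = i_k`
(`k = 1, …, n`) are locked, with derivative bounded below by `β^{n−1} x`. -/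
theorem stmt18 (w x : ℝ) (hw : 1 < w) (hx : x ∈ Set.Ioc (0 : ℝ) 1) (σ : ℕ → Bool)
    (n : ℕ) (hn : 1 ≤ n) (i : ℕ → ℤ) :
    StrictMonoOn (phiBeta w x σ n)
      {β : ℝ | 1 < β ∧ ∀ k < n,
        ⌊(if σ (k + 1) = true then w * β else β) * phiBeta w x σ k β⌋ = i k} ∧
    ∃ D : ℝ → ℝ,
      ContinuousOn D
        {β : ℝ | 1 < β ∧ ∀ k < n,
          ⌊(if σ (k + 1) = true then w * β else β) * phiBeta w x σ k β⌋ = i k} ∧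
      ∀ β ∈ {β : ℝ | 1 < β ∧ ∀ k < n,
          ⌊(if σ (k + 1) = true then w * β else β) * phiBeta w x σ k β⌋ = i k},
        HasDerivWithinAt (phiBeta w x σ n) (D β)
          {β : ℝ | 1 < β ∧ ∀ k < n,
            ⌊(if σ (k + 1) = true then w * β else β) * phiBeta w x σ k β⌋ = i k} β ∧
        β ^ (n - 1) * x ≤ D β := by
  obtain ⟨hOC, hMono, hStrict, hContD, hDeriv⟩ := main_lemma w x hw hx.1 σ i n
  exact ⟨hStrict hn, Dfun w x σ n, hContD,
    fun β hβ => ⟨(hDeriv β hβ).1, (hDeriv β hβ).2.2 hn⟩⟩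
end
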